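/- arXiv:1510.01832 — 3 statements merged into one kernel-verified Lean document; each statement's English description precedes it below -/
import Mathlib

section
/- Fix c ∈ ℝ, a > 1 and b > 0, and let W^{a,b} = {(x,y) ∈ ℝ² : |x| ∈ (1,a), |y| < b|x|/2}. Then W^{a,b} is multiplicatively tiling with respect to the set {(A_{a^k} S_{mb})^{-T} : k, m ∈ ℤ}, where A_a = [[a,0],[0,a^c]] and S_m = [[1,m],[0,1]]: for almost every ξ ∈ ℝ², ∑_{k∈ℤ} ∑_{m∈ℤ} 𝟙_{(A_{a^k} S_{mb})^{-T} W^{a,b}}(ξ) = 1. -/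
open Matrix Set MeasureTheory
open scoped ENNReal

noncomputable section

/-- The shearing matrix `S_m = [[1, m], [0, 1]]`. -/
def Sm (m : ℝ) : Matrix (Fin 2) (Fin 2) ℝ := !![1, m; 0, 1]

/-- The (anisotropic) scaling matrix `A_a = [[a, 0], [0, a^c]]`. -/
def Aa (c a : ℝ) : Matrix (Fin 2) (Fin 2) ℝ := !![a, 0; 0, a ^ c]

/-- The set `W^{a,b} = {(x,y) ∈ ℝ² : |x| ∈ (1,a), |y| < b|x|/2}`. -/
def Wab (a b : ℝ) : Set (Fin 2 → ℝ) :=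
  {v | |v 0| ∈ Set.Ioo 1 a ∧ |v 1| < b * |v 0| / 2}

lemma image_mem_iff (M : Matrix (Fin 2) (Fin 2) ℝ) (hM : IsUnit M.det)
    (W : Set (Fin 2 → ℝ)) (ξ : Fin 2 → ℝ) :
    ξ ∈ (M⁻¹)ᵀ.mulVec '' W ↔ Mᵀ.mulVec ξ ∈ W := by
  constructor
  · rintro ⟨w, hw, rfl⟩
    rwa [Matrix.mulVec_mulVec, ← Matrix.transpose_mul, Matrix.nonsing_inv_mul _ hM,
      Matrix.transpose_one, Matrix.one_mulVec]
  · intro h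
    exact ⟨_, h, by rw [Matrix.mulVec_mulVec, ← Matrix.transpose_mul,
      Matrix.mul_nonsing_inv _ hM, Matrix.transpose_one, Matrix.one_mulVec]⟩

lemma key (c a b : ℝ) (ha : 1 < a) (hb : 0 < b) (ξ : Fin 2 → ℝ)
    (h0 : ξ 0 ≠ 0)
    (h1 : ∀ n : ℤ, |ξ 0| ≠ a ^ (n : ℝ))
    (h2 : ∀ k n : ℤ, ξ 1 ≠ ((n : ℝ) + 1/2) * (a ^ ((k : ℝ) * (1 - c)) * b * ξ 0)) :
    (∑' k : ℤ, ∑' m : ℤ,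
        ((((Aa c (a ^ k) * Sm ((m : ℝ) * b))⁻¹)ᵀ.mulVec '' Wab a b).indicator
          (fun _ => (1 : ℝ≥0∞)) ξ)) = 1 := by
  have ha0 : (0 : ℝ) < a := lt_trans one_pos ha
  have habs : (0 : ℝ) < |ξ 0| := abs_pos.mpr h0
  set t : ℤ → ℝ := fun k => a ^ ((k : ℝ) * (1 - c)) * b * ξ 0 with ht_def
  have ht : ∀ k : ℤ, t k ≠ 0 := fun k =>
    mul_ne_zero (mul_ne_zero (Real.rpow_pos_of_pos ha0 _).ne' hb.ne') h0
  have htabs : ∀ k : ℤ, |t k| = a ^ ((k : ℝ) * (1 - c)) * b * |ξ 0| := by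
    intro k
    rw [ht_def]
    rw [abs_mul, abs_mul, abs_of_pos (Real.rpow_pos_of_pos ha0 _), abs_of_pos hb]
  -- membership characterization
  have mem_iff : ∀ k m : ℤ,
      (ξ ∈ (((Aa c (a ^ k) * Sm ((m : ℝ) * b))⁻¹)ᵀ.mulVec '' Wab a b)
        ↔ ((1 < a ^ ((k : ℝ)) * |ξ 0| ∧ a ^ ((k : ℝ)) * |ξ 0| < a)
            ∧ |(m : ℝ) * t k + ξ 1| < |t k| / 2)) := by
    intro k m
    have hPz : (0 : ℝ) < a ^ k := zpow_pos ha0 k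
    have hPr : (a : ℝ) ^ k = a ^ ((k : ℝ)) := (Real.rpow_intCast a k).symm
    have hQ : (0 : ℝ) < a ^ ((k : ℝ) * c) := Real.rpow_pos_of_pos ha0 _
    have hQr : ((a : ℝ) ^ k) ^ c = a ^ ((k : ℝ) * c) := by
      rw [hPr, ← Real.rpow_mul ha0.le]
    have hiden : a ^ ((k : ℝ) * c) * a ^ ((k : ℝ) * (1 - c)) = a ^ ((k : ℝ)) := by
      rw [← Real.rpow_add ha0]; ring_nf
    have hdet : IsUnit (Aa c (a ^ k) * Sm ((m : ℝ) * b)).det := by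
      have h : (Aa c (a ^ k) * Sm ((m : ℝ) * b)).det = a ^ k * (a ^ k) ^ c := by
        rw [Matrix.det_mul]; simp [Aa, Sm, Matrix.det_fin_two_of]
      rw [h]
      exact (mul_pos hPz (Real.rpow_pos_of_pos hPz c)).ne'.isUnit
    rw [image_mem_iff _ hdet]
    have hMeq : Aa c (a ^ k) * Sm ((m : ℝ) * b)
        = !![a ^ k, a ^ k * ((m : ℝ) * b); 0, (a ^ k) ^ c] := by
      simp [Aa, Sm, Matrix.mul_fin_two]
    rw [hMeq]
    have hmv : (!![a ^ k, a ^ k * ((m : ℝ) * b); 0, (a ^ k) ^ c])ᵀ.mulVec ξ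
        = ![a ^ k * ξ 0, a ^ k * ((m : ℝ) * b) * ξ 0 + (a ^ k) ^ c * ξ 1] := by
      funext i
      fin_cases i <;>
        simp [Matrix.mulVec, dotProduct, Fin.sum_univ_two, Matrix.transpose]
    rw [hmv]
    have hv0 : |a ^ k * ξ 0| = a ^ ((k : ℝ)) * |ξ 0| := by
      rw [abs_mul, abs_of_pos hPz, hPr]
    constructor
    · rintro ⟨hio, hsh⟩
      simp only [Matrix.cons_val_zero, Matrix.cons_val_one, Matrix.head_cons] at hio hsh
      refine ⟨by rwa [hv0, Set.mem_Ioo] at hio, ?_⟩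
      rw [← mul_lt_mul_iff_right₀ hQ, ← abs_of_pos hQ, ← abs_mul]
      have harg : a ^ ((k : ℝ) * c) * ((m : ℝ) * t k + ξ 1)
          = a ^ k * ((m : ℝ) * b) * ξ 0 + (a ^ k) ^ c * ξ 1 := by
        rw [ht_def, hQr, hPr]
        linear_combination ((m : ℝ) * ξ 0 * b) * hiden
      have hrhs : |a ^ ((k : ℝ) * c)| * (|t k| / 2) = b * |a ^ k * ξ 0| / 2 := by
        rw [abs_of_pos hQ, htabs k, hv0]
        linear_combination (b * |ξ 0| / 2) * hiden
      rw [harg, hrhs]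
      exact hsh
    · rintro ⟨hio, hsh⟩
      constructor
      · simp only [Matrix.cons_val_zero]
        rw [hv0]; exact hio
      · simp only [Matrix.cons_val_zero, Matrix.cons_val_one, Matrix.head_cons]
        have harg : a ^ ((k : ℝ) * c) * ((m : ℝ) * t k + ξ 1)
            = a ^ k * ((m : ℝ) * b) * ξ 0 + (a ^ k) ^ c * ξ 1 := by
          rw [ht_def, hQr, hPr]
          linear_combination ((m : ℝ) * ξ 0 * b) * hiden
        have hrhs : |a ^ ((k : ℝ) * c)| * (|t k| / 2) = b * |a ^ k * ξ 0| / 2 := by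
          rw [abs_of_pos hQ, htabs k, hv0]
          linear_combination (b * |ξ 0| / 2) * hiden
        rw [← harg, ← hrhs, abs_mul, abs_of_pos hQ]
        rw [abs_of_pos hQ] at *
        exact (mul_lt_mul_iff_right₀ hQ).mpr hsh
  -- the unique k
  set L : ℝ := Real.logb a |ξ 0| with hL_def
  have haL : a ^ L = |ξ 0| := Real.rpow_logb ha0 (ne_of_gt ha) habs
  have cond1_iff : ∀ k : ℤ,
      (1 < a ^ ((k : ℝ)) * |ξ 0| ∧ a ^ ((k : ℝ)) * |ξ 0| < a)
        ↔ (0 < (k : ℝ) + L ∧ (k : ℝ) + L < 1) := by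
    intro k
    have he : a ^ ((k : ℝ)) * |ξ 0| = a ^ ((k : ℝ) + L) := by
      rw [Real.rpow_add ha0, haL]
    rw [he]
    have e1 : (1 : ℝ) < a ^ ((k : ℝ) + L) ↔ 0 < (k : ℝ) + L := by
      have := Real.rpow_lt_rpow_left_iff (y := (0 : ℝ)) (z := (k : ℝ) + L) ha
      rwa [Real.rpow_zero] at this
    have e2 : a ^ ((k : ℝ) + L) < a ↔ (k : ℝ) + L < 1 := by
      have := Real.rpow_lt_rpow_left_iff (y := (k : ℝ) + L) (z := (1 : ℝ)) ha
      rwa [Real.rpow_one] at this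
    rw [e1, e2]
  have hLfloor : (⌊L⌋ : ℝ) < L := by
    refine lt_of_le_of_ne (Int.floor_le L) (fun h => h1 ⌊L⌋ ?_)
    rw [h, haL]
  set k₀ : ℤ := -⌊L⌋ with hk₀_def
  have hk₀ : 0 < (k₀ : ℝ) + L ∧ (k₀ : ℝ) + L < 1 := by
    have h2' := Int.lt_floor_add_one L
    constructor <;> [skip; skip] <;> · push_cast [hk₀_def]; linarith
  have kuniq : ∀ k : ℤ, (0 < (k : ℝ) + L ∧ (k : ℝ) + L < 1) → k = k₀ := by
    intro k hk
    have c1 : (k : ℝ) < (k₀ : ℝ) + 1 := by linarith [hk.1, hk.2, hk₀.1, hk₀.2]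
    have c2 : (k₀ : ℝ) < (k : ℝ) + 1 := by linarith [hk.1, hk.2, hk₀.1, hk₀.2]
    have c1' : k < k₀ + 1 := by exact_mod_cast c1
    have c2' : k₀ < k + 1 := by exact_mod_cast c2
    omega
  -- the unique m
  set s : ℝ := ξ 1 / t k₀ with hs_def
  have hst : ξ 1 = s * t k₀ := (div_mul_cancel₀ _ (ht k₀)).symm
  have cond2_iff : ∀ m : ℤ,
      (|(m : ℝ) * t k₀ + ξ 1| < |t k₀| / 2) ↔ |(m : ℝ) + s| < 1 / 2 := by
    intro m
    have he : (m : ℝ) * t k₀ + ξ 1 = t k₀ * ((m : ℝ) + s) := by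
      rw [hst]; ring
    rw [he, abs_mul, div_eq_mul_one_div |t k₀| 2]
    exact mul_lt_mul_iff_right₀ (abs_pos.mpr (ht k₀))
  have hs_ne : ∀ n : ℤ, s ≠ (n : ℝ) + 1 / 2 := by
    intro n hsn
    exact h2 k₀ n (by rw [hst, hsn])
  set m₀ : ℤ := round (-s) with hm₀_def
  have hm₀ : |(m₀ : ℝ) + s| < 1 / 2 := by
    have hle : |(m₀ : ℝ) + s| ≤ 1 / 2 := by
      have := abs_sub_round (-s)
      rw [abs_sub_comm] at this
      calc |(m₀ : ℝ) + s| = |(m₀ : ℝ) - -s| := by ring_nf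
        _ ≤ 1 / 2 := this
    refine lt_of_le_of_ne hle (fun heq => ?_)
    rcases (abs_eq (by norm_num : (0:ℝ) ≤ 1/2)).mp heq with h' | h'
    · exact hs_ne (-m₀) (by push_cast; linarith)
    · exact hs_ne (-m₀ - 1) (by push_cast; linarith)
  have muniq : ∀ m : ℤ, |(m : ℝ) + s| < 1 / 2 → m = m₀ := by
    intro m hm
    have : |((m : ℝ) + s) - ((m₀ : ℝ) + s)| < 1 :=
      lt_of_le_of_lt (abs_sub _ _) (by linarith)
    have h' : |(m : ℝ) - (m₀ : ℝ)| < 1 := by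
      convert this using 2; ring
    have h'' : |m - m₀| < 1 := by exact_mod_cast h'
    rw [abs_lt] at h''
    omega
  -- sum computation
  rw [tsum_eq_single k₀ (fun k hk => ?_), tsum_eq_single m₀ (fun m hm => ?_)]
  · exact Set.indicator_of_mem
      ((mem_iff k₀ m₀).mpr ⟨(cond1_iff k₀).mpr hk₀, (cond2_iff m₀).mpr hm₀⟩) _
  · refine Set.indicator_of_notMem (fun hmem => hm ?_) _
    exact muniq m ((cond2_iff m).mp ((mem_iff k₀ m).mp hmem).2)
  · refine ENNReal.tsum_eq_zero.mpr (fun m => Set.indicator_of_notMem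
      (fun hmem => hk ?_) _)
    exact kuniq k ((cond1_iff k).mp ((mem_iff k m).mp hmem).1)

lemma null_line (α β γ : ℝ) (h : α ≠ 0 ∨ β ≠ 0) :
    volume {ξ : Fin 2 → ℝ | α * ξ 0 + β * ξ 1 = γ} = 0 := by
  set f : (Fin 2 → ℝ) →ₗ[ℝ] ℝ :=
    α • LinearMap.proj 0 + β • LinearMap.proj 1 with hf
  have hfv : ∀ ξ : Fin 2 → ℝ, f ξ = α * ξ 0 + β * ξ 1 := by
    intro ξ; simp [hf, smul_eq_mul]
  have hv : f ![α, β] = α^2 + β^2 := by rw [hfv]; simp; ring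
  have hpos : (0:ℝ) < α^2 + β^2 := by
    rcases h with h | h
    · positivity
    · positivity
  have hker : LinearMap.ker f ≠ ⊤ := by
    intro hk
    have : f ![α, β] = 0 := by
      have := LinearMap.ker_eq_top.mp hk
      simp [this]
    rw [hv] at this; linarith
  set x₀ : Fin 2 → ℝ := (γ / (α^2 + β^2)) • ![α, β] with hx0
  have hfx0 : f x₀ = γ := by
    rw [hx0, _root_.map_smul, hv, smul_eq_mul, div_mul_cancel₀]
    exact ne_of_gt hpos
  have hset : (fun x => x + x₀) ⁻¹' {ξ : Fin 2 → ℝ | α * ξ 0 + β * ξ 1 = γ}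
      = (LinearMap.ker f : Set (Fin 2 → ℝ)) := by
    ext x
    simp only [Set.mem_preimage, Set.mem_setOf_eq, SetLike.mem_coe, LinearMap.mem_ker]
    rw [← hfv, map_add, hfx0]
    constructor
    · intro hx; linarith [hfv x]
    · intro hx; rw [hx]; ring
  have hker0 : volume (LinearMap.ker f : Set (Fin 2 → ℝ)) = 0 :=
    Measure.addHaar_submodule volume _ hker
  have hpre := measure_preimage_add volume x₀ {ξ : Fin 2 → ℝ | α * ξ 0 + β * ξ 1 = γ}
  rw [← hpre]
  have hcomm : (x₀ + ·) = (fun x : Fin 2 → ℝ => x + x₀) := by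
    funext x; exact add_comm _ _
  rw [hcomm, hset, hker0]

/-- The set `W^{a,b}` is multiplicatively tiling with respect
to `{(A_{aᵏ} S_{mb})^{-T} : k, m ∈ ℤ}`: for almost every `ξ ∈ ℝ²`,
`∑ₖ ∑ₘ 𝟙_{(A_{aᵏ} S_{mb})^{-T} W^{a,b}}(ξ) = 1`. -/
theorem statement_10 (c a b : ℝ) (ha : 1 < a) (hb : 0 < b) :
    ∀ᵐ (ξ : Fin 2 → ℝ) ∂volume,
      (∑' k : ℤ, ∑' m : ℤ,
        ((((Aa c (a ^ k) * Sm ((m : ℝ) * b))⁻¹)ᵀ.mulVec '' Wab a b).indicator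
          (fun _ => (1 : ℝ≥0∞)) ξ)) = 1 := by
  have ha0 : (0 : ℝ) < a := lt_trans one_pos ha
  set B : Set (Fin 2 → ℝ) :=
    {ξ | ξ 0 = 0}
      ∪ ((⋃ n : ℤ, ({ξ | ξ 0 = a ^ (n : ℝ)} ∪ {ξ | ξ 0 = -a ^ (n : ℝ)}))
      ∪ ⋃ k : ℤ, ⋃ n : ℤ,
          {ξ : Fin 2 → ℝ |
            ξ 1 = ((n : ℝ) + 1/2) * (a ^ ((k : ℝ) * (1 - c)) * b * ξ 0)}) with hB_def
  have hline0 : ∀ v : ℝ, volume {ξ : Fin 2 → ℝ | ξ 0 = v} = 0 := by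
    intro v
    have : {ξ : Fin 2 → ℝ | ξ 0 = v} = {ξ : Fin 2 → ℝ | 1 * ξ 0 + 0 * ξ 1 = v} := by
      ext ξ; simp
    rw [this]
    exact null_line 1 0 v (Or.inl one_ne_zero)
  have hline1 : ∀ r : ℝ, volume {ξ : Fin 2 → ℝ | ξ 1 = r * ξ 0} = 0 := by
    intro r
    have : {ξ : Fin 2 → ℝ | ξ 1 = r * ξ 0}
        = {ξ : Fin 2 → ℝ | (-r) * ξ 0 + 1 * ξ 1 = 0} := by
      ext ξ
      constructor
      · intro h'; simp only [Set.mem_setOf_eq] at *; linarith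
      · intro h'; simp only [Set.mem_setOf_eq] at *; linarith
    rw [this]
    exact null_line (-r) 1 0 (Or.inr one_ne_zero)
  have hB : volume B = 0 := by
    rw [hB_def]
    refine measure_union_null (hline0 0) (measure_union_null ?_ ?_)
    · refine measure_iUnion_null fun n => measure_union_null (hline0 _) ?_
      exact hline0 _
    · refine measure_iUnion_null fun k => measure_iUnion_null fun n => ?_
      have : {ξ : Fin 2 → ℝ |
            ξ 1 = ((n : ℝ) + 1/2) * (a ^ ((k : ℝ) * (1 - c)) * b * ξ 0)}
          = {ξ : Fin 2 → ℝ |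
            ξ 1 = (((n : ℝ) + 1/2) * (a ^ ((k : ℝ) * (1 - c)) * b)) * ξ 0} := by
        ext ξ; simp only [Set.mem_setOf_eq]; constructor <;> (intro h'; linarith)
      rw [this]
      exact hline1 _
  rw [MeasureTheory.ae_iff]
  refine measure_mono_null (fun ξ hξ => ?_) hB
  by_contra hB'
  apply hξ
  simp only [hB_def, Set.mem_union, Set.mem_iUnion, not_or, not_exists,
    Set.mem_setOf_eq] at hB'
  obtain ⟨hb0, hb1, hb2⟩ := hB'
  refine key c a b ha hb ξ hb0 (fun n hn => ?_) (fun k n => (hb2 k n))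
  rcases (abs_eq (Real.rpow_pos_of_pos ha0 _).le).mp hn with h' | h'
  · exact (hb1 n).1 h'
  · exact (hb1 n).2 h'
end
end

section
/- Let a ∈ ℕ with a ≥ 2, let n ∈ ℕ be even with n > 2, and set b = tan(π/n). Let V = V^{a,n} = {(x,y) ∈ ℝ² : |y| ∈ (1,a], |x| ≤ tan(π/n)|y|}. Then V is translationally k-tiling with k = 2(a−1) with respect to the lattice Γ = b(a+1)ℤ × ℤ: for almost every ξ ∈ ℝ², ∑_{γ∈Γ} 𝟙_{γ+V}(ξ) = 2(a−1). -/
open MeasureTheory Set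
open scoped ENNReal

noncomputable section

/-- The set `V^{a,n} = {(x,y) ∈ ℝ² : |y| ∈ (1,a], |x| ≤ tan(π/n)|y|}`. -/
def Van (a n : ℕ) : Set (ℝ × ℝ) :=
  {p | |p.2| ∈ Set.Ioc 1 (a : ℝ) ∧ |p.1| ≤ Real.tan (Real.pi / n) * |p.2|}

lemma slant_null (c₂ e : ℝ) (hc : c₂ ≠ 0) :
    volume {p : ℝ × ℝ | p.1 + c₂ * p.2 = e} = 0 := by
  have hm : MeasurableSet {p : ℝ × ℝ | p.1 + c₂ * p.2 = e} :=
    (isClosed_eq (by fun_prop) continuous_const).measurableSet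
  rw [Measure.volume_eq_prod, Measure.prod_apply hm]
  have h : ∀ x : ℝ, (Prod.mk x ⁻¹' {p : ℝ × ℝ | p.1 + c₂ * p.2 = e}) = {(e - x)/c₂} := by
    intro x
    ext y
    simp only [Set.mem_preimage, Set.mem_setOf_eq, Set.mem_singleton_iff]
    rw [eq_div_iff hc]
    constructor <;> intro h <;> nlinarith [mul_comm c₂ y]
  simp [h]

lemma horiz_null (e : ℝ) : volume {p : ℝ × ℝ | p.2 = e} = 0 := by
  have hm : MeasurableSet {p : ℝ × ℝ | p.2 = e} :=
    (isClosed_eq continuous_snd continuous_const).measurableSet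
  rw [Measure.volume_eq_prod, Measure.prod_apply hm]
  have h : ∀ x : ℝ, (Prod.mk x ⁻¹' {p : ℝ × ℝ | p.2 = e}) = {e} := by
    intro x; ext y; simp
  simp [h]

lemma tsum_count (L x c : ℝ) (hL : 0 < L) (hc : 0 < c)
    (hgen : ∀ k : ℤ, x - c ≠ k * L) :
    (∑' k : ℤ, if |x - k * L| ≤ c then (1 : ℝ≥0∞) else 0)
      = ((⌊(x + c) / L⌋ - ⌊(x - c) / L⌋).toNat : ℝ≥0∞) := by
  set A := ⌊(x - c) / L⌋ with hA
  set B := ⌊(x + c) / L⌋ with hB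
  have key : ∀ k : ℤ, |x - k * L| ≤ c ↔ k ∈ Finset.Icc (A + 1) B := by
    intro k
    rw [Finset.mem_Icc, abs_le]
    constructor
    · rintro ⟨h1, h2⟩
      refine ⟨?_, Int.le_floor.mpr (by rw [le_div_iff₀ hL]; linarith)⟩
      have hk : (x - c) / L ≤ k := by rw [div_le_iff₀ hL]; linarith
      have hne : (x - c) / L ≠ (k : ℝ) := by
        intro h
        exact hgen k (by field_simp at h; linarith)
      have h3 : A < k := Int.floor_lt.mpr (lt_of_le_of_ne hk hne)
      omega
    · rintro ⟨h1, h2⟩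
      have hlow : (x - c)/L < (k:ℝ) := by
        have := Int.lt_floor_add_one ((x - c)/L)
        have hc1 : ((A:ℝ) + 1) ≤ (k:ℝ) := by exact_mod_cast h1
        linarith
      have hlow' : x - c < k * L := by rwa [div_lt_iff₀ hL] at hlow
      have hup0 : (k:ℝ) ≤ (B:ℝ) := by exact_mod_cast h2
      have hup : (k:ℝ) ≤ (x + c)/L := le_trans hup0 (Int.floor_le _)
      have hup' : k * L ≤ x + c := by rwa [le_div_iff₀ hL] at hup
      constructor <;> linarith
  have hz : ∀ k ∉ Finset.Icc (A+1) B, (if |x - k * L| ≤ c then (1:ℝ≥0∞) else 0) = 0 := by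
    intro k hk
    exact if_neg (fun h => hk ((key k).mp h))
  rw [tsum_eq_sum hz, Finset.sum_congr rfl (fun k hk => if_pos ((key k).mpr hk)),
    Finset.sum_const, Int.card_Icc, nsmul_eq_mul, mul_one]
  congr 1
  omega

lemma pair_two (L x u : ℝ) (hL : 0 < L) (h0 : 0 < u) (huL : u < L) :
    ((⌊(x + u) / L⌋ - ⌊(x - u) / L⌋).toNat : ℝ≥0∞)
      + ((⌊(x + (L - u)) / L⌋ - ⌊(x - (L - u)) / L⌋).toNat : ℝ≥0∞) = 2 := by
  have e1 : (x + (L - u)) / L = (x - u) / L + 1 := by field_simp; ring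
  have e2 : (x - (L - u)) / L = (x + u) / L - 1 := by field_simp; ring
  have f1 := Int.floor_add_intCast ((x - u)/L) 1
  have f2 := Int.floor_sub_intCast ((x + u)/L) 1
  push_cast at f1 f2
  rw [e1, e2, f1, f2]
  set A := ⌊(x - u)/L⌋
  set B := ⌊(x + u)/L⌋
  have hAB : A ≤ B := Int.floor_le_floor (div_le_div_of_nonneg_right (by linarith) hL.le)
  have hBA : B ≤ A + 2 := by
    have e3 : (x - u)/L + 2 = (x - u + 2*L)/L := by field_simp
    have h2 : (x + u)/L ≤ (x - u)/L + 2 := by rw [e3]; exact div_le_div_of_nonneg_right (by linarith) hL.le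
    have f3 := Int.floor_add_intCast ((x - u)/L) 2
    have h4 : B ≤ ⌊(x - u)/L + ((2:ℤ):ℝ)⌋ := Int.floor_le_floor (by push_cast; exact h2)
    omega
  have hnat : (B - A).toNat + (A + 1 - (B - 1)).toNat = 2 := by omega
  rw [← Nat.cast_add, hnat]
  norm_num

/-- For `a ∈ ℕ`, `a ≥ 2`, and even `n > 2`, the set `V^{a,n}`
is translationally `k`-tiling with `k = 2(a-1)` with respect to the lattice
`Γ = b(a+1)ℤ × ℤ`, where `b = tan(π/n)`. -/
theorem statement_14 (a n : ℕ) (ha : 2 ≤ a) (hn : Even n) (hn2 : 2 < n) :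
    ∀ᵐ p : ℝ × ℝ ∂volume,
      (∑' z : ℤ × ℤ, (Van a n).indicator (fun _ => (1 : ℝ≥0∞))
        (p - ((z.1 : ℝ) * (Real.tan (Real.pi / n) * ((a : ℝ) + 1)), (z.2 : ℝ)))) =
      (2 * (a - 1) : ℕ) := by
  classical
  have hn' : (0:ℝ) < n := by exact_mod_cast (by omega : 0 < n)
  have hn2' : (2:ℝ) < n := by exact_mod_cast hn2
  set b := Real.tan (Real.pi / n) with hbdef
  have hbpos : 0 < b := by
    apply Real.tan_pos_of_pos_of_lt_pi_div_two
    · positivity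
    · rw [div_lt_div_iff₀ hn' (by norm_num)]
      nlinarith [Real.pi_pos]
  set L := b * ((a : ℝ) + 1) with hLdef
  have hL : 0 < L := by positivity
  have ha' : (2:ℝ) ≤ a := by exact_mod_cast ha
  have hae : ∀ᵐ p : ℝ × ℝ ∂volume,
      (∀ m : ℤ, p.2 ≠ (m : ℝ)) ∧
      (∀ k m : ℤ, p.1 + b * p.2 ≠ k * L + b * m ∧ p.1 - b * p.2 ≠ k * L - b * m) := by
    rw [ae_iff]
    apply measure_mono_null (t :=
      (⋃ m : ℤ, {p : ℝ × ℝ | p.2 = (m : ℝ)}) ∪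
      ⋃ km : ℤ × ℤ, ({p : ℝ × ℝ | p.1 + b * p.2 = km.1 * L + b * km.2} ∪
        {p : ℝ × ℝ | p.1 - b * p.2 = km.1 * L - b * km.2}))
    · intro p hp
      simp only [Set.mem_setOf_eq] at hp
      rw [not_and_or] at hp
      rcases hp with hp | hp
      · push_neg at hp
        obtain ⟨m, hm⟩ := hp
        exact Or.inl (Set.mem_iUnion.mpr ⟨m, hm⟩)
      · push_neg at hp
        obtain ⟨k, m, hkm⟩ := hp
        refine Or.inr (Set.mem_iUnion.mpr ⟨(k, m), ?_⟩)
        by_cases h1 : p.1 + b * p.2 = k * L + b * m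
        · exact Or.inl h1
        · exact Or.inr (hkm h1)
    · apply measure_union_null
      · exact measure_iUnion_null fun m => horiz_null (m : ℝ)
      · apply measure_iUnion_null
        intro km
        apply measure_union_null
        · exact slant_null b _ (ne_of_gt hbpos)
        · have hs : {p : ℝ × ℝ | p.1 - b * p.2 = km.1 * L - b * km.2}
              = {p : ℝ × ℝ | p.1 + (-b) * p.2 = km.1 * L - b * km.2} := by
            ext q
            simp only [Set.mem_setOf_eq]
            constructor <;> intro h <;> linarith
          rw [hs]
          exact slant_null (-b) _ (by linarith)
  filter_upwards [hae] with p hp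
  obtain ⟨hy, hx⟩ := hp
  set x := p.1 with hxdef
  set y := p.2 with hydef
  have hfl : (⌊y⌋ : ℝ) < y := lt_of_le_of_ne (Int.floor_le y) (fun h => hy ⌊y⌋ h.symm)
  have hfu : y < (⌊y⌋ : ℝ) + 1 := Int.lt_floor_add_one y
  set F : ℤ → ℤ → ℝ≥0∞ := fun m k =>
    if (|y - (m : ℝ)| ∈ Set.Ioc 1 (a : ℝ) ∧ |x - (k : ℝ) * L| ≤ b * |y - (m : ℝ)|)
    then (1 : ℝ≥0∞) else 0 with hFdef
  have hsum : ∀ z : ℤ × ℤ, (Van a n).indicator (fun _ => (1 : ℝ≥0∞))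
      (p - ((z.1 : ℝ) * (b * ((a : ℝ) + 1)), (z.2 : ℝ))) = F z.2 z.1 := by
    intro z
    rw [Set.indicator_apply, hFdef]
    refine if_congr ?_ rfl rfl
    simp only [Van, Set.mem_setOf_eq, Prod.fst_sub, Prod.snd_sub]
    rfl
  have e0 : (∑' z : ℤ × ℤ, (Van a n).indicator (fun _ => (1 : ℝ≥0∞))
      (p - ((z.1 : ℝ) * (b * ((a : ℝ) + 1)), (z.2 : ℝ)))) = ∑' m : ℤ, ∑' k : ℤ, F m k := by
    rw [tsum_congr hsum, ENNReal.tsum_prod' (f := fun z : ℤ × ℤ => F z.2 z.1)]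
    exact ENNReal.tsum_comm
  rw [e0]
  -- genericity of x
  have hgen : ∀ m : ℤ, ∀ k : ℤ, x - b * |y - (m : ℝ)| ≠ k * L := by
    intro m k h
    rcases le_or_gt (m : ℝ) y with hc | hc
    · rw [abs_of_nonneg (by linarith)] at h
      apply (hx k m).2
      have hb2 : b * (y - (m:ℝ)) = b * y - b * m := by ring
      linarith
    · rw [abs_of_neg (by linarith)] at h
      apply (hx k m).1
      have hb2 : b * (-(y - (m:ℝ))) = b * m - b * y := by ring
      linarith
  set g : ℤ → ℝ≥0∞ := fun m =>
    if |y - (m : ℝ)| ∈ Set.Ioc 1 (a : ℝ)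
    then ((⌊(x + b * |y - (m : ℝ)|) / L⌋ - ⌊(x - b * |y - (m : ℝ)|) / L⌋).toNat : ℝ≥0∞)
    else 0 with hgdef
  have hinner : ∀ m : ℤ, (∑' k : ℤ, F m k) = g m := by
    intro m
    by_cases hm : |y - (m : ℝ)| ∈ Set.Ioc 1 (a : ℝ)
    · have h1 : ∀ k : ℤ, F m k = if |x - (k : ℝ) * L| ≤ b * |y - (m : ℝ)| then (1 : ℝ≥0∞) else 0 := by
        intro k
        rw [hFdef]
        simp only [hm, true_and]
      rw [tsum_congr h1, hgdef]
      simp only [hm, if_true]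
      exact tsum_count L x (b * |y - (m:ℝ)|) hL
        (mul_pos hbpos (lt_trans one_pos hm.1)) (hgen m)
    · have h1 : ∀ k : ℤ, F m k = 0 := by
        intro k
        rw [hFdef]
        exact if_neg (fun hc => hm hc.1)
      rw [tsum_congr h1, tsum_zero, hgdef]
      simp only [hm, if_false]
  rw [tsum_congr hinner]
  -- support characterization
  have hioc : ∀ m : ℤ, |y - (m : ℝ)| ∈ Set.Ioc 1 (a : ℝ) ↔
      (m ∈ Finset.Icc (⌊y⌋ - a + 1) (⌊y⌋ - 1) ∨ m ∈ Finset.Icc (⌊y⌋ + 2) (⌊y⌋ + a)) := by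
    intro m
    rw [Set.mem_Ioc, Finset.mem_Icc, Finset.mem_Icc]
    constructor
    · rintro ⟨h1, h2⟩
      rcases le_or_gt (m : ℝ) y with hc | hc
      · rw [abs_of_nonneg (by linarith)] at h1 h2
        have hlt : y - m < a := lt_of_le_of_ne h2 (fun h => hy (m + a) (by push_cast; linarith))
        left
        constructor
        · have c1 : (⌊y⌋ : ℝ) < (m : ℝ) + (a : ℝ) := by linarith [Int.floor_le y]
          have c2 : ⌊y⌋ < m + (a : ℤ) := by exact_mod_cast c1
          omega
        · have c1 : (m : ℝ) < (⌊y⌋ : ℝ) := by linarith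
          have c2 : m < ⌊y⌋ := by exact_mod_cast c1
          omega
      · rw [abs_of_neg (by linarith)] at h1 h2
        have hlt : -(y - (m : ℝ)) < a := lt_of_le_of_ne h2 (fun h => hy (m - a) (by push_cast; linarith))
        right
        constructor
        · have c1 : (⌊y⌋ : ℝ) + 1 < m := by linarith [Int.floor_le y]
          have c2 : ⌊y⌋ + 1 < m := by exact_mod_cast c1
          omega
        · have c1 : (m : ℝ) < (⌊y⌋ : ℝ) + 1 + a := by linarith
          have c2 : m < ⌊y⌋ + 1 + (a : ℤ) := by exact_mod_cast c1
          omega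
    · rintro (⟨hm1, hm2⟩ | ⟨hm1, hm2⟩)
      · have h1 : (m : ℝ) ≤ (⌊y⌋ : ℝ) - 1 := by exact_mod_cast hm2
        have h2 : (⌊y⌋ : ℝ) - (a : ℝ) + 1 ≤ m := by exact_mod_cast hm1
        have hgt : 1 < y - m := by linarith
        rw [abs_of_pos (by linarith)]
        exact ⟨hgt, by linarith⟩
      · have h1 : (⌊y⌋ : ℝ) + 2 ≤ m := by exact_mod_cast hm1
        have h2 : (m : ℝ) ≤ (⌊y⌋ : ℝ) + a := by exact_mod_cast hm2
        have hgt : 1 < (m : ℝ) - y := by linarith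
        rw [abs_of_neg (by linarith)]
        constructor
        · linarith
        · linarith
  have hdisj : Disjoint (Finset.Icc (⌊y⌋ - a + 1) (⌊y⌋ - 1)) (Finset.Icc (⌊y⌋ + 2) (⌊y⌋ + (a:ℤ))) := by
    rw [Finset.disjoint_left]
    intro m h1 h2
    rw [Finset.mem_Icc] at h1 h2
    omega
  have hsupp : ∀ m ∉ (Finset.Icc (⌊y⌋ - a + 1) (⌊y⌋ - 1) ∪ Finset.Icc (⌊y⌋ + 2) (⌊y⌋ + (a:ℤ))), g m = 0 := by
    intro m hm
    rw [hgdef]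
    refine if_neg (fun hc => hm ?_)
    rw [Finset.mem_union]
    exact (hioc m).mp hc
  rw [tsum_eq_sum hsupp, Finset.sum_union hdisj]
  have hmap : Finset.Icc (⌊y⌋ + 2) (⌊y⌋ + (a:ℤ))
      = Finset.map (addRightEmbedding ((a:ℤ) + 1)) (Finset.Icc (⌊y⌋ - a + 1) (⌊y⌋ - 1)) := by
    rw [Finset.map_add_right_Icc]
    congr 1 <;> omega
  rw [hmap, Finset.sum_map]
  simp only [addRightEmbedding_apply]
  rw [← Finset.sum_add_distrib]
  have hpair : ∀ m ∈ Finset.Icc (⌊y⌋ - a + 1) (⌊y⌋ - 1), g m + g (m + ((a:ℤ) + 1)) = 2 := by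
    intro m hm
    rw [Finset.mem_Icc] at hm
    have h1 : (m : ℝ) ≤ (⌊y⌋ : ℝ) - 1 := by exact_mod_cast hm.2
    have h2 : (⌊y⌋ : ℝ) - (a : ℝ) + 1 ≤ m := by exact_mod_cast hm.1
    have hu1 : 1 < y - m := by linarith
    have hu2 : y - m < a := by linarith
    have habs1 : |y - (m : ℝ)| = y - m := abs_of_pos (by linarith)
    have hcond1 : |y - (m : ℝ)| ∈ Set.Ioc 1 (a : ℝ) := by
      rw [Set.mem_Ioc, habs1]
      exact ⟨hu1, hu2.le⟩
    have hc2 : ((m + ((a:ℤ) + 1) : ℤ) : ℝ) = (m : ℝ) + a + 1 := by push_cast; ring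
    have habs2 : |y - ((m + ((a:ℤ) + 1) : ℤ) : ℝ)| = ((a : ℝ) + 1) - (y - m) := by
      rw [hc2, abs_of_neg (by linarith)]
      ring
    have hcond2 : |y - ((m + ((a:ℤ) + 1) : ℤ) : ℝ)| ∈ Set.Ioc 1 (a : ℝ) := by
      rw [Set.mem_Ioc, habs2]
      constructor
      · linarith
      · linarith
    have hrw : b * (((a : ℝ) + 1) - (y - m)) = L - b * (y - m) := by
      rw [hLdef]; ring
    simp only [hgdef]
    rw [if_pos hcond1, if_pos hcond2, habs1, habs2, hrw]
    exact pair_two L x (b * (y - m)) hL (mul_pos hbpos (by linarith))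
      (by rw [hLdef]; nlinarith)
  rw [Finset.sum_congr rfl hpair, Finset.sum_const, Int.card_Icc]
  have hcard : ((⌊y⌋ : ℤ) - 1 + 1 - (⌊y⌋ - a + 1)).toNat = a - 1 := by omega
  rw [hcard, nsmul_eq_mul]
  push_cast [Nat.cast_sub (by omega : 1 ≤ a)]
  ring
end
end

section
/- Let a ∈ ℕ with a ≥ 2, let n ∈ ℕ be even with n > 2, set b = tan(π/n), and let V = {(x,y) ∈ ℝ² : |y| ∈ (1,a], |x| ≤ b|y|}, with the pieces V_{+,1} = {(x,y) ∈ V : y > 0, |x| ≤ b}, V_{+,2} = {(x,y) ∈ V : y > 0, x < −b}, V_{+,3} = {(x,y) ∈ V : y > 0, x > b}, and V_{−,i} = −V_{+,i} for i = 1,2,3. Then, up to sets of Lebesgue measure zero, the six translated sets V_{+,1} + (0,−1), V_{−,1} + (0,1), V_{+,2} + (0,−1), V_{−,2} + (−b(a+1), a), V_{+,3} + (−b(a+1), −a), V_{−,3} + (0,1) are pairwise disjoint and their union equals the rectangle [−ba, b] × [−(a−1), a−1]. -/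
open MeasureTheory Set
open scoped symmDiff

noncomputable section

/-- `V_{+,1} = {(x,y) ∈ V : y > 0, |x| ≤ b}`. -/
def Vp1 (a n : ℕ) : Set (ℝ × ℝ) :=
  {p ∈ Van a n | 0 < p.2 ∧ |p.1| ≤ Real.tan (Real.pi / n)}

/-- `V_{+,2} = {(x,y) ∈ V : y > 0, x < -b}`. -/
def Vp2 (a n : ℕ) : Set (ℝ × ℝ) :=
  {p ∈ Van a n | 0 < p.2 ∧ p.1 < -Real.tan (Real.pi / n)}

/-- `V_{+,3} = {(x,y) ∈ V : y > 0, x > b}`. -/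
def Vp3 (a n : ℕ) : Set (ℝ × ℝ) :=
  {p ∈ Van a n | 0 < p.2 ∧ Real.tan (Real.pi / n) < p.1}

/-- The six translated pieces of `V` used in the shift-and-merge procedure. -/
def vpieces (a n : ℕ) : Fin 6 → Set (ℝ × ℝ) :=
  ![(fun p => p + ((0 : ℝ), (-1 : ℝ))) '' Vp1 a n,
    (fun p => p + ((0 : ℝ), (1 : ℝ))) '' (-Vp1 a n),
    (fun p => p + ((0 : ℝ), (-1 : ℝ))) '' Vp2 a n,
    (fun p => p + (-(Real.tan (Real.pi / n) * ((a : ℝ) + 1)), (a : ℝ))) '' (-Vp2 a n),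
    (fun p => p + (-(Real.tan (Real.pi / n) * ((a : ℝ) + 1)), -(a : ℝ))) '' Vp3 a n,
    (fun p => p + ((0 : ℝ), (1 : ℝ))) '' (-Vp3 a n)]

lemma mem_image_add {G : Type*} [AddGroup G] (v : G) (S : Set G) (p : G) :
    p ∈ (fun q => q + v) '' S ↔ p - v ∈ S :=
  ⟨by rintro ⟨q, hq, rfl⟩; simpa, fun h => ⟨p - v, h, by simp⟩⟩

lemma null_vert (c : ℝ) : volume {p : ℝ × ℝ | p.1 = c} = 0 := by
  have h : {p : ℝ × ℝ | p.1 = c} = ({c} : Set ℝ) ×ˢ (univ : Set ℝ) := by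
    ext p; simp [Set.mem_prod, Prod.ext_iff, eq_comm]
  rw [h, Measure.volume_eq_prod ℝ ℝ, Measure.prod_prod]
  simp

lemma null_horiz (c : ℝ) : volume {p : ℝ × ℝ | p.2 = c} = 0 := by
  have h : {p : ℝ × ℝ | p.2 = c} = (univ : Set ℝ) ×ˢ ({c} : Set ℝ) := by
    ext p; simp [Set.mem_prod, Prod.ext_iff, eq_comm]
  rw [h, Measure.volume_eq_prod ℝ ℝ, Measure.prod_prod]
  simp

lemma null_slant (b c : ℝ) (hb : b ≠ 0) :
    volume {p : ℝ × ℝ | p.1 + b * p.2 = c} = 0 := by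
  have hmeas : MeasurableSet {p : ℝ × ℝ | p.1 + b * p.2 = c} :=
    (isClosed_eq (continuous_fst.add (continuous_const.mul continuous_snd))
      continuous_const).measurableSet
  rw [Measure.volume_eq_prod ℝ ℝ, Measure.prod_apply hmeas]
  have h : ∀ x : ℝ, (Prod.mk x ⁻¹' {p : ℝ × ℝ | p.1 + b * p.2 = c}) = {(c - x) / b} := by
    intro x
    ext y
    simp only [Set.mem_preimage, Set.mem_setOf_eq, Set.mem_singleton_iff]
    rw [eq_div_iff hb]
    constructor
    · intro h; linarith
    · intro h; linarith [h]
  simp [h]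

lemma key_lemma (b A : ℝ) (hb : 0 < b) (hA : 2 ≤ A) (P : Fin 6 → Set (ℝ × ℝ))
    (h0 : ∀ p : ℝ × ℝ, p ∈ P 0 ↔ 0 < p.2 ∧ p.2 ≤ A - 1 ∧ |p.1| ≤ b)
    (h1 : ∀ p : ℝ × ℝ, p ∈ P 1 ↔ -(A - 1) ≤ p.2 ∧ p.2 < 0 ∧ |p.1| ≤ b)
    (h2 : ∀ p : ℝ × ℝ, p ∈ P 2 ↔ 0 < p.2 ∧ p.2 ≤ A - 1 ∧ -(b * (p.2 + 1)) ≤ p.1 ∧ p.1 < -b)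
    (h3 : ∀ p : ℝ × ℝ, p ∈ P 3 ↔ 0 ≤ p.2 ∧ p.2 < A - 1 ∧ -(b * A) < p.1 ∧ p.1 ≤ -(b * (p.2 + 1)))
    (h4 : ∀ p : ℝ × ℝ, p ∈ P 4 ↔ -(A - 1) < p.2 ∧ p.2 ≤ 0 ∧ -(b * A) < p.1 ∧ p.1 ≤ b * (p.2 - 1))
    (h5 : ∀ p : ℝ × ℝ, p ∈ P 5 ↔ -(A - 1) ≤ p.2 ∧ p.2 < 0 ∧ b * (p.2 - 1) ≤ p.1 ∧ p.1 < -b) :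
    (∀ i j : Fin 6, i ≠ j → volume (P i ∩ P j) = 0) ∧
    volume ((⋃ i, P i) ∆ (Icc (-(b * A)) b ×ˢ Icc (-(A - 1)) (A - 1))) = 0 := by
  have hbne : b ≠ 0 := ne_of_gt hb
  have hbne' : -b ≠ 0 := by simpa using hbne
  -- 15 pairwise intersections
  have H01 : volume (P 0 ∩ P 1) = 0 := by
    refine measure_mono_null (fun p hp => ?_) (null_horiz 0)
    obtain ⟨hi, hj⟩ := hp
    rw [h0] at hi; rw [h1] at hj
    exact absurd hi.1 (by linarith [hj.2.1])
  have H02 : volume (P 0 ∩ P 2) = 0 := by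
    refine measure_mono_null (fun p hp => ?_) (null_horiz 0)
    obtain ⟨hi, hj⟩ := hp
    rw [h0] at hi; rw [h2] at hj
    have := abs_le.mp hi.2.2
    exact absurd hj.2.2.2 (by linarith [this.1])
  have H03 : volume (P 0 ∩ P 3) = 0 := by
    refine measure_mono_null (fun p hp => ?_) (null_vert (-b))
    obtain ⟨hi, hj⟩ := hp
    rw [h0] at hi; rw [h3] at hj
    have h1' := (abs_le.mp hi.2.2).1
    have hby : 0 ≤ b * p.2 := mul_nonneg hb.le hj.1
    show p.1 = -b
    nlinarith [hj.2.2.2]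
  have H04 : volume (P 0 ∩ P 4) = 0 := by
    refine measure_mono_null (fun p hp => ?_) (null_horiz 0)
    obtain ⟨hi, hj⟩ := hp
    rw [h0] at hi; rw [h4] at hj
    exact absurd hi.1 (by linarith [hj.2.1])
  have H05 : volume (P 0 ∩ P 5) = 0 := by
    refine measure_mono_null (fun p hp => ?_) (null_horiz 0)
    obtain ⟨hi, hj⟩ := hp
    rw [h0] at hi; rw [h5] at hj
    exact absurd hi.1 (by linarith [hj.2.1])
  have H12 : volume (P 1 ∩ P 2) = 0 := by
    refine measure_mono_null (fun p hp => ?_) (null_horiz 0)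
    obtain ⟨hi, hj⟩ := hp
    rw [h1] at hi; rw [h2] at hj
    exact absurd hi.2.1 (by linarith [hj.1])
  have H13 : volume (P 1 ∩ P 3) = 0 := by
    refine measure_mono_null (fun p hp => ?_) (null_horiz 0)
    obtain ⟨hi, hj⟩ := hp
    rw [h1] at hi; rw [h3] at hj
    exact absurd hi.2.1 (by linarith [hj.1])
  have H14 : volume (P 1 ∩ P 4) = 0 := by
    refine measure_mono_null (fun p hp => ?_) (null_vert (-b))
    obtain ⟨hi, hj⟩ := hp
    rw [h1] at hi; rw [h4] at hj
    have h1' := (abs_le.mp hi.2.2).1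
    have hby : b * p.2 ≤ 0 := mul_nonpos_of_nonneg_of_nonpos hb.le hj.2.1
    show p.1 = -b
    nlinarith [hj.2.2.2]
  have H15 : volume (P 1 ∩ P 5) = 0 := by
    refine measure_mono_null (fun p hp => ?_) (null_horiz 0)
    obtain ⟨hi, hj⟩ := hp
    rw [h1] at hi; rw [h5] at hj
    have h1' := (abs_le.mp hi.2.2).1
    exact absurd hj.2.2.2 (by linarith)
  have H23 : volume (P 2 ∩ P 3) = 0 := by
    refine measure_mono_null (fun p hp => ?_) (null_slant b (-b) hbne)
    obtain ⟨hi, hj⟩ := hp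
    rw [h2] at hi; rw [h3] at hj
    show p.1 + b * p.2 = -b
    have := hi.2.2.1
    have := hj.2.2.2
    nlinarith
  have H24 : volume (P 2 ∩ P 4) = 0 := by
    refine measure_mono_null (fun p hp => ?_) (null_horiz 0)
    obtain ⟨hi, hj⟩ := hp
    rw [h2] at hi; rw [h4] at hj
    exact absurd hi.1 (by linarith [hj.2.1])
  have H25 : volume (P 2 ∩ P 5) = 0 := by
    refine measure_mono_null (fun p hp => ?_) (null_horiz 0)
    obtain ⟨hi, hj⟩ := hp
    rw [h2] at hi; rw [h5] at hj
    exact absurd hi.1 (by linarith [hj.2.1])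
  have H34 : volume (P 3 ∩ P 4) = 0 := by
    refine measure_mono_null (fun p hp => ?_) (null_horiz 0)
    obtain ⟨hi, hj⟩ := hp
    rw [h3] at hi; rw [h4] at hj
    show p.2 = 0
    linarith [hi.1, hj.2.1]
  have H35 : volume (P 3 ∩ P 5) = 0 := by
    refine measure_mono_null (fun p hp => ?_) (null_horiz 0)
    obtain ⟨hi, hj⟩ := hp
    rw [h3] at hi; rw [h5] at hj
    exact absurd hi.1 (by linarith [hj.2.1])
  have H45 : volume (P 4 ∩ P 5) = 0 := by
    refine measure_mono_null (fun p hp => ?_) (null_slant (-b) (-b) hbne')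
    obtain ⟨hi, hj⟩ := hp
    rw [h4] at hi; rw [h5] at hj
    show p.1 + -b * p.2 = -b
    have := hi.2.2.2
    have := hj.2.2.1
    nlinarith
  constructor
  · intro i j hne
    fin_cases i <;> fin_cases j <;>
      first
        | exact absurd rfl hne
        | exact H01 | exact H02 | exact H03 | exact H04 | exact H05
        | exact H12 | exact H13 | exact H14 | exact H15
        | exact H23 | exact H24 | exact H25
        | exact H34 | exact H35 | exact H45
        | (rw [Set.inter_comm]
           first
             | exact H01 | exact H02 | exact H03 | exact H04 | exact H05
             | exact H12 | exact H13 | exact H14 | exact H15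
             | exact H23 | exact H24 | exact H25
             | exact H34 | exact H35 | exact H45)
  · -- symmetric difference
    have hsub : ((⋃ i, P i) ∆ (Icc (-(b * A)) b ×ˢ Icc (-(A - 1)) (A - 1))) ⊆
        {p : ℝ × ℝ | p.2 = 0} ∪ {p : ℝ × ℝ | p.1 = -(b * A)} := by
      rw [Set.symmDiff_def]
      rintro p (⟨hpU, hpR⟩ | ⟨hpR, hpU⟩)
      · -- union ⊆ rectangle: contradiction
        exfalso
        apply hpR
        rw [Set.mem_prod, Set.mem_Icc, Set.mem_Icc]
        obtain ⟨i, hi⟩ := Set.mem_iUnion.mp hpU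
        fin_cases i
        · obtain ⟨hy1, hy2, hx⟩ := (h0 p).mp hi
          have := abs_le.mp hx
          refine ⟨⟨?_, this.2⟩, ?_, ?_⟩ <;> nlinarith [this.1]
        · obtain ⟨hy1, hy2, hx⟩ := (h1 p).mp hi
          have := abs_le.mp hx
          refine ⟨⟨?_, this.2⟩, ?_, ?_⟩ <;> nlinarith [this.1]
        · obtain ⟨hy1, hy2, hx1, hx2⟩ := (h2 p).mp hi
          refine ⟨⟨?_, ?_⟩, ?_, ?_⟩ <;> nlinarith
        · obtain ⟨hy1, hy2, hx1, hx2⟩ := (h3 p).mp hi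
          refine ⟨⟨?_, ?_⟩, ?_, ?_⟩ <;> nlinarith
        · obtain ⟨hy1, hy2, hx1, hx2⟩ := (h4 p).mp hi
          refine ⟨⟨?_, ?_⟩, ?_, ?_⟩ <;> nlinarith
        · obtain ⟨hy1, hy2, hx1, hx2⟩ := (h5 p).mp hi
          refine ⟨⟨?_, ?_⟩, ?_, ?_⟩ <;> nlinarith
      · -- rectangle minus union ⊆ two lines
        rw [Set.mem_prod, Set.mem_Icc, Set.mem_Icc] at hpR
        obtain ⟨⟨hx1, hx2⟩, hy1, hy2⟩ := hpR
        by_contra hcon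
        simp only [Set.mem_union, Set.mem_setOf_eq, not_or] at hcon
        obtain ⟨hyne, hxne⟩ := hcon
        have hx1' : -(b * A) < p.1 := lt_of_le_of_ne hx1 (Ne.symm hxne)
        apply hpU
        rw [Set.mem_iUnion]
        rcases lt_trichotomy p.2 0 with hy | hy | hy
        · -- lower half
          rcases le_or_gt (-b) p.1 with hx | hx
          · exact ⟨1, (h1 p).mpr ⟨hy1, hy, abs_le.mpr ⟨hx, hx2⟩⟩⟩
          · rcases le_or_gt (b * (p.2 - 1)) p.1 with hx' | hx'
            · exact ⟨5, (h5 p).mpr ⟨hy1, hy, hx', hx⟩⟩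
            · refine ⟨4, (h4 p).mpr ⟨?_, hy.le, hx1', hx'.le⟩⟩
              by_contra hcon2
              push_neg at hcon2
              have : p.2 = -(A - 1) := le_antisymm hcon2 hy1
              rw [this] at hx'
              have : b * (-(A - 1) - 1) = -(b * A) := by ring
              rw [this] at hx'
              linarith
        · exact absurd hy hyne
        · -- upper half
          rcases le_or_gt (-b) p.1 with hx | hx
          · exact ⟨0, (h0 p).mpr ⟨hy, hy2, abs_le.mpr ⟨hx, hx2⟩⟩⟩
          · rcases le_or_gt (-(b * (p.2 + 1))) p.1 with hx' | hx'
            · exact ⟨2, (h2 p).mpr ⟨hy, hy2, hx', hx⟩⟩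
            · refine ⟨3, (h3 p).mpr ⟨hy.le, ?_, hx1', hx'.le⟩⟩
              by_contra hcon2
              push_neg at hcon2
              have : p.2 = A - 1 := le_antisymm hy2 hcon2
              rw [this] at hx'
              have : -(b * (A - 1 + 1)) = -(b * A) := by ring
              rw [this] at hx'
              linarith
    exact measure_mono_null hsub
      (measure_union_null (null_horiz 0) (null_vert (-(b * A))))

/-- Up to Lebesgue null sets, the six translated pieces
`V_{+,1}+(0,-1)`, `V_{-,1}+(0,1)`, `V_{+,2}+(0,-1)`, `V_{-,2}+(-b(a+1),a)`,
`V_{+,3}+(-b(a+1),-a)`, `V_{-,3}+(0,1)` are pairwise disjoint and their union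
is the rectangle `[-ba, b] × [-(a-1), a-1]`, where `b = tan(π/n)`. -/
theorem statement_15 (a n : ℕ) (ha : 2 ≤ a) (hn : Even n) (hn2 : 2 < n) :
    (∀ i j : Fin 6, i ≠ j → volume (vpieces a n i ∩ vpieces a n j) = 0) ∧
    volume ((⋃ i, vpieces a n i) ∆
      (Set.Icc (-(Real.tan (Real.pi / n) * (a : ℝ))) (Real.tan (Real.pi / n)) ×ˢ
        Set.Icc (-((a : ℝ) - 1)) ((a : ℝ) - 1))) = 0 := by
  have hnR : (2 : ℝ) < n := by exact_mod_cast hn2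
  set b := Real.tan (Real.pi / n) with hbdef
  set A := (a : ℝ) with hAdef
  have hA : (2 : ℝ) ≤ A := by rw [hAdef]; exact_mod_cast ha
  have hb : 0 < b := by
    apply Real.tan_pos_of_pos_of_lt_pi_div_two
    · exact div_pos Real.pi_pos (by linarith)
    · rw [div_lt_div_iff₀ (by linarith) (by norm_num)]
      nlinarith [Real.pi_pos]
  have m0 : ∀ p : ℝ × ℝ, p ∈ vpieces a n 0 ↔ 0 < p.2 ∧ p.2 ≤ A - 1 ∧ |p.1| ≤ b := by
    intro p
    rw [show vpieces a n 0 = (fun q => q + ((0 : ℝ), (-1 : ℝ))) '' Vp1 a n from rfl,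
      mem_image_add]
    simp only [Vp1, Van, Set.mem_sep_iff, Set.mem_setOf_eq, Set.mem_Ioc, Prod.fst_sub,
      Prod.snd_sub, sub_zero, sub_neg_eq_add, ← hbdef, ← hAdef]
    constructor
    · rintro ⟨⟨⟨hy1, hy2⟩, _⟩, hy0, hx⟩
      rw [abs_of_pos hy0] at hy1 hy2
      exact ⟨by linarith, by linarith, hx⟩
    · rintro ⟨hy1, hy2, hx⟩
      have hy0 : (0 : ℝ) < p.2 + 1 := by linarith
      rw [abs_of_pos hy0]
      refine ⟨⟨⟨by linarith, by linarith⟩, ?_⟩, hy0, hx⟩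
      nlinarith
  have m1 : ∀ p : ℝ × ℝ, p ∈ vpieces a n 1 ↔ -(A - 1) ≤ p.2 ∧ p.2 < 0 ∧ |p.1| ≤ b := by
    intro p
    rw [show vpieces a n 1 = (fun q => q + ((0 : ℝ), (1 : ℝ))) '' (-Vp1 a n) from rfl,
      mem_image_add, Set.mem_neg]
    simp only [Vp1, Van, Set.mem_sep_iff, Set.mem_setOf_eq, Set.mem_Ioc, Prod.fst_neg,
      Prod.snd_neg, Prod.fst_sub, Prod.snd_sub, sub_zero, abs_neg, ← hbdef, ← hAdef]
    constructor
    · rintro ⟨⟨⟨hy1, hy2⟩, _⟩, hy0, hx⟩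
      rw [abs_of_neg (by linarith : p.2 - 1 < 0)] at hy1 hy2
      exact ⟨by linarith, by linarith, hx⟩
    · rintro ⟨hy1, hy2, hx⟩
      have hy0 : (0 : ℝ) < -(p.2 - 1) := by linarith
      rw [abs_of_neg (by linarith : p.2 - 1 < 0)]
      refine ⟨⟨⟨by linarith, by linarith⟩, ?_⟩, hy0, hx⟩
      nlinarith
  have m2 : ∀ p : ℝ × ℝ, p ∈ vpieces a n 2 ↔
      0 < p.2 ∧ p.2 ≤ A - 1 ∧ -(b * (p.2 + 1)) ≤ p.1 ∧ p.1 < -b := by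
    intro p
    rw [show vpieces a n 2 = (fun q => q + ((0 : ℝ), (-1 : ℝ))) '' Vp2 a n from rfl,
      mem_image_add]
    simp only [Vp2, Van, Set.mem_sep_iff, Set.mem_setOf_eq, Set.mem_Ioc, Prod.fst_sub,
      Prod.snd_sub, sub_zero, sub_neg_eq_add, ← hbdef, ← hAdef]
    constructor
    · rintro ⟨⟨⟨hy1, hy2⟩, hx1⟩, hy0, hx2⟩
      rw [abs_of_pos hy0] at hy1 hy2
      rw [abs_of_neg (by linarith : p.1 < 0), abs_of_pos hy0] at hx1
      exact ⟨by linarith, by linarith, by linarith, hx2⟩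
    · rintro ⟨hy1, hy2, hx1, hx2⟩
      have hy0 : (0 : ℝ) < p.2 + 1 := by linarith
      rw [abs_of_pos hy0]
      refine ⟨⟨⟨by linarith, by linarith⟩, ?_⟩, hy0, hx2⟩
      rw [abs_of_neg (by linarith : p.1 < 0)]
      linarith
  have m3 : ∀ p : ℝ × ℝ, p ∈ vpieces a n 3 ↔
      0 ≤ p.2 ∧ p.2 < A - 1 ∧ -(b * A) < p.1 ∧ p.1 ≤ -(b * (p.2 + 1)) := by
    intro p
    rw [show vpieces a n 3 =
      (fun q => q + (-(Real.tan (Real.pi / n) * ((a : ℝ) + 1)), (a : ℝ))) '' (-Vp2 a n)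
      from rfl, mem_image_add, Set.mem_neg]
    simp only [Vp2, Van, Set.mem_sep_iff, Set.mem_setOf_eq, Set.mem_Ioc, Prod.fst_neg,
      Prod.snd_neg, Prod.fst_sub, Prod.snd_sub, sub_neg_eq_add, ← hbdef, ← hAdef]
    constructor
    · rintro ⟨⟨⟨hy1, hy2⟩, hx1⟩, hy0, hx2⟩
      rw [abs_of_pos hy0] at hy1 hy2
      rw [abs_of_neg (by linarith : -(p.1 + b * (A + 1)) < 0), abs_of_pos hy0] at hx1
      refine ⟨by linarith, by linarith, by linarith, by nlinarith⟩
    · rintro ⟨hy1, hy2, hx1, hx2⟩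
      have hy0 : (0 : ℝ) < -(p.2 - A) := by linarith
      rw [abs_of_pos hy0]
      have hq1 : -(p.1 + b * (A + 1)) < -b := by linarith
      refine ⟨⟨⟨by linarith, by linarith⟩, ?_⟩, hy0, hq1⟩
      rw [abs_of_neg (by linarith : -(p.1 + b * (A + 1)) < 0)]
      nlinarith
  have m4 : ∀ p : ℝ × ℝ, p ∈ vpieces a n 4 ↔
      -(A - 1) < p.2 ∧ p.2 ≤ 0 ∧ -(b * A) < p.1 ∧ p.1 ≤ b * (p.2 - 1) := by
    intro p
    rw [show vpieces a n 4 =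
      (fun q => q + (-(Real.tan (Real.pi / n) * ((a : ℝ) + 1)), -(a : ℝ))) '' Vp3 a n
      from rfl, mem_image_add]
    simp only [Vp3, Van, Set.mem_sep_iff, Set.mem_setOf_eq, Set.mem_Ioc, Prod.fst_sub,
      Prod.snd_sub, sub_neg_eq_add, ← hbdef, ← hAdef]
    constructor
    · rintro ⟨⟨⟨hy1, hy2⟩, hx1⟩, hy0, hx2⟩
      rw [abs_of_pos hy0] at hy1 hy2
      rw [abs_of_pos (by linarith : (0 : ℝ) < p.1 + b * (A + 1)), abs_of_pos hy0] at hx1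
      refine ⟨by linarith, by linarith, by linarith, by nlinarith⟩
    · rintro ⟨hy1, hy2, hx1, hx2⟩
      have hy0 : (0 : ℝ) < p.2 + A := by linarith
      rw [abs_of_pos hy0]
      have hq1 : b < p.1 + b * (A + 1) := by linarith
      refine ⟨⟨⟨by linarith, by linarith⟩, ?_⟩, hy0, hq1⟩
      rw [abs_of_pos (by linarith : (0 : ℝ) < p.1 + b * (A + 1))]
      nlinarith
  have m5 : ∀ p : ℝ × ℝ, p ∈ vpieces a n 5 ↔
      -(A - 1) ≤ p.2 ∧ p.2 < 0 ∧ b * (p.2 - 1) ≤ p.1 ∧ p.1 < -b := by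
    intro p
    rw [show vpieces a n 5 = (fun q => q + ((0 : ℝ), (1 : ℝ))) '' (-Vp3 a n) from rfl,
      mem_image_add, Set.mem_neg]
    simp only [Vp3, Van, Set.mem_sep_iff, Set.mem_setOf_eq, Set.mem_Ioc, Prod.fst_neg,
      Prod.snd_neg, Prod.fst_sub, Prod.snd_sub, sub_zero, ← hbdef, ← hAdef]
    constructor
    · rintro ⟨⟨⟨hy1, hy2⟩, hx1⟩, hy0, hx2⟩
      rw [abs_of_pos hy0] at hy1 hy2
      rw [abs_of_pos (by linarith : (0 : ℝ) < -p.1), abs_of_pos hy0] at hx1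
      refine ⟨by linarith, by linarith, by nlinarith, by linarith⟩
    · rintro ⟨hy1, hy2, hx1, hx2⟩
      have hy0 : (0 : ℝ) < -(p.2 - 1) := by linarith
      rw [abs_of_pos hy0]
      have hq1 : b < -p.1 := by linarith
      refine ⟨⟨⟨by linarith, by linarith⟩, ?_⟩, hy0, hq1⟩
      rw [abs_of_pos (by linarith : (0 : ℝ) < -p.1)]
      nlinarith
  exact key_lemma b A hb hA (vpieces a n) m0 m1 m2 m3 m4 m5
end
end
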